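/- Let S be a Hausdorff topological space and let Φ be a real Banach space whose elements are (identified via an injective linear map with) real-valued functions on S. Let K be a nonempty compact metrizable Φ-convex subset of S and suppose: (1) the restriction of each φ ∈ Φ to K is continuous, and there exists α_K ≥ 0 such that sup_{x∈K}|φ(x)| ≤ α_K ‖φ‖_Φ for all φ ∈ Φ; (2) Φ separates the points of K. Then: (i) the set of φ ∈ Φ that attain a strict maximum on K at some point contains a dense Gδ subset of (Φ,‖·‖_Φ); in particular the set ΦExp(K) of Φ-exposed points of K is nonempty; and (ii) K = conv_Φ(ΦExp(K)), the Φ-convex hull of ΦExp(K). -/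

import Mathlib

/-- A subset `X` of `S` is `Φ`-convex (w.r.t. an evaluation `ev : Φ → S → ℝ`) if `X = S` or
`X` is the intersection of a nonempty family of sets `{x : ev φ x ≤ λ}`, `φ ∈ Φ`, `λ ∈ ℝ`. -/
def IsPhiConvex {S Φ : Type*} (ev : Φ → S → ℝ) (X : Set S) : Prop :=
  X = Set.univ ∨ ∃ T : Set (Φ × ℝ), T.Nonempty ∧
    X = ⋂ p ∈ T, {x : S | ev p.1 x ≤ p.2}

/-- The `Φ`-convex hull of a set `A`: the intersection of all `Φ`-convex sets containing `A`. -/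
def phiConvexHull {S Φ : Type*} (ev : Φ → S → ℝ) (A : Set S) : Set S :=
  ⋂₀ {X : Set S | IsPhiConvex ev X ∧ A ⊆ X}

/-- The set of `Φ`-exposed points of `C`: points of `C` at which some `φ ∈ Φ` attains a
strict maximum over `C`. -/
def phiExposedPoints {S Φ : Type*} (ev : Φ → S → ℝ) (C : Set S) : Set S :=
  {x ∈ C | ∃ φ : Φ, ∀ y ∈ C, y ≠ x → ev φ y < ev φ x}

open Metric TopologicalSpace

lemma exists_separating_seq {X : Type*} [MetricSpace X] [CompactSpace X]
    {Φ : Type*} [NormedAddCommGroup Φ]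
    (f : Φ → X → ℝ) (hcont : ∀ φ, Continuous (f φ))
    (hsep : ∀ x y : X, x ≠ y → ∃ φ, f φ x ≠ f φ y) :
    ∃ g : ℕ → Φ, ∀ x y : X, x ≠ y → ∃ k, f (g k) x ≠ f (g k) y := by
  set F : Φ → C(X, ℝ) := fun φ => ⟨f φ, hcont φ⟩ with hF
  set A : Set C(X, ℝ) := Set.range F with hA
  obtain ⟨s, hsc, hsd⟩ := TopologicalSpace.exists_countable_dense ↥A
  set D : Set C(X, ℝ) := insert (F 0) (Subtype.val '' s) with hD
  have hDc : D.Countable := (hsc.image _).insert _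
  have hDA : D ⊆ A := by
    rintro x (rfl | ⟨⟨y, hy⟩, _, rfl⟩)
    · exact ⟨0, rfl⟩
    · exact hy
  obtain ⟨e, he⟩ := hDc.exists_eq_range ⟨F 0, Set.mem_insert _ _⟩
  have heA : ∀ k, e k ∈ A := fun k => hDA (he ▸ Set.mem_range_self k)
  choose g hg using heA
  refine ⟨g, fun x y hxy => ?_⟩
  obtain ⟨φ, hφ⟩ := hsep x y hxy
  set d := |f φ x - f φ y| with hd
  have hd0 : 0 < d := abs_pos.mpr (sub_ne_zero.mpr hφ)
  have hFA : F φ ∈ A := ⟨φ, rfl⟩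
  obtain ⟨⟨G, hGA⟩, hGball, hGs⟩ :=
    (Metric.dense_iff.mp hsd ⟨F φ, hFA⟩ (d / 3) (by positivity))
  have hGD : G ∈ D := Set.mem_insert_of_mem _ ⟨⟨G, hGA⟩, hGs, rfl⟩
  obtain ⟨k, hk⟩ := (he ▸ hGD : G ∈ Set.range e)
  have hdist : dist (F (g k)) (F φ) < d / 3 := by
    have : dist (⟨G, hGA⟩ : ↥A) ⟨F φ, hFA⟩ < d / 3 := Metric.mem_ball.mp hGball
    rw [Subtype.dist_eq] at this
    simpa [hg k, hk] using this
  have hx' : |f (g k) x - f φ x| ≤ dist (F (g k)) (F φ) := by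
    simpa [F, Real.dist_eq] using ContinuousMap.dist_apply_le_dist (f := F (g k)) (g := F φ) x
  have hy' : |f (g k) y - f φ y| ≤ dist (F (g k)) (F φ) := by
    simpa [F, Real.dist_eq] using ContinuousMap.dist_apply_le_dist (f := F (g k)) (g := F φ) y
  refine ⟨k, fun hEq => ?_⟩
  have h1 := abs_lt.mp (lt_of_le_of_lt hx' hdist)
  have h2 := abs_lt.mp (lt_of_le_of_lt hy' hdist)
  have hEq' : f (g k) x - f (g k) y = 0 := by rw [hEq]; ring
  have : |f φ x - f φ y| < d := by
    rw [abs_sub_lt_iff]; constructor <;> linarith [h1.1, h1.2, h2.1, h2.2]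
  rw [← hd] at this
  exact lt_irrefl d this

section Aux
variable {X : Type*} [MetricSpace X] [CompactSpace X] [Nonempty X]
    {Φ : Type*} [NormedAddCommGroup Φ] [NormedSpace ℝ Φ] [CompleteSpace Φ]

lemma aux_dense_gdelta
    (f : Φ →ₗ[ℝ] (X → ℝ)) (hcont : ∀ φ, Continuous (f φ))
    (α : ℝ) (hα : 0 ≤ α) (hbound : ∀ φ x, |f φ x| ≤ α * ‖φ‖)
    (hsepseq : ∃ g : ℕ → Φ, ∀ x y : X, x ≠ y → ∃ k, f (g k) x ≠ f (g k) y) :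
    ∃ G : Set Φ, Dense G ∧ IsGδ G ∧
      ∀ φ ∈ G, ∃ x : X, ∀ y : X, y ≠ x → f φ y < f φ x := by
  obtain ⟨g, hg⟩ := hsepseq
  -- maximum point selector
  choose xm hxm1 hxm2 using fun φ : Φ =>
    isCompact_univ.exists_isMaxOn Set.univ_nonempty (hcont φ).continuousOn
  set Mx : Φ → ℝ := fun φ => f φ (xm φ) with hMxdef
  have hMx : ∀ (φ : Φ) (y : X), f φ y ≤ Mx φ := fun φ y => hxm2 φ (Set.mem_univ y)
  -- Lipschitz in φ
  have hlip : ∀ φ ψ : Φ, ∀ x : X, |f φ x - f ψ x| ≤ α * ‖φ - ψ‖ := by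
    intro φ ψ x
    have h := hbound (φ - ψ) x
    rwa [map_sub, Pi.sub_apply] at h
  have hMlip : ∀ φ ψ : Φ, Mx φ ≤ Mx ψ + α * ‖φ - ψ‖ := by
    intro φ ψ
    have h1 := hlip φ ψ (xm φ)
    have h2 := hMx ψ (xm φ)
    have := abs_le.mp h1
    simp only [hMxdef]
    linarith [this.1, this.2]
  set near : Φ → ℝ → Set X := fun φ δ => {x | Mx φ - δ ≤ f φ x} with hneardef
  set U : ℝ → Set Φ := fun ε => {φ | ∃ δ > 0, Metric.diam (near φ δ) < ε} with hUdef
  -- openness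
  have hUopen : ∀ ε : ℝ, IsOpen (U ε) := by
    intro ε
    rw [Metric.isOpen_iff]
    rintro φ ⟨δ, hδ, hdiam⟩
    refine ⟨δ / (4 * (α + 1)), by positivity, fun ψ hψ => ?_⟩
    rw [Metric.mem_ball, dist_eq_norm] at hψ
    refine ⟨δ / 2, by positivity, lt_of_le_of_lt
      (Metric.diam_mono ?_ isBounded_of_compactSpace) hdiam⟩
    intro x hx
    have hx' : Mx ψ - δ / 2 ≤ f ψ x := hx
    have h1 := abs_le.mp (hlip φ ψ x)
    have h2 := hMlip φ ψ
    have h3 : α * ‖ψ - φ‖ ≤ δ / 4 := by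
      have hn := mul_le_mul_of_nonneg_left hψ.le hα
      have h5 : α * (δ / (4 * (α + 1))) ≤ δ / 4 := by
        rw [mul_div_assoc', div_le_div_iff₀ (by positivity) (by norm_num)]
        nlinarith
      linarith
    have h4 : ‖φ - ψ‖ = ‖ψ - φ‖ := norm_sub_rev _ _
    rw [h4] at h1 h2
    show Mx φ - δ ≤ f φ x
    linarith [h1.1, h1.2]
  -- membership criterion
  have hUmem : ∀ φ : Φ, (∀ n : ℕ, φ ∈ U (1 / (n + 1))) →
      ∃ x : X, ∀ y : X, y ≠ x → f φ y < f φ x := by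
    intro φ h
    refine ⟨xm φ, fun y hy => ?_⟩
    rcases lt_or_eq_of_le (hMx φ y) with hlt | heq
    · exact hlt
    · exfalso
      apply hy
      have hdy : ∀ n : ℕ, dist y (xm φ) < 1 / (n + 1) := by
        intro n
        obtain ⟨δ, hδ, hd⟩ := h n
        have hy' : y ∈ near φ δ := by
          show Mx φ - δ ≤ f φ y
          linarith [heq.ge]
        have hx' : xm φ ∈ near φ δ := by
          show Mx φ - δ ≤ f φ (xm φ)
          have : Mx φ = f φ (xm φ) := rfl
          linarith
        exact lt_of_le_of_lt (Metric.dist_le_diam_of_mem isBounded_of_compactSpace hy' hx') hd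
      by_contra hne
      have hpos : 0 < dist y (xm φ) := dist_pos.mpr hne
      obtain ⟨n, hn⟩ := exists_nat_one_div_lt hpos
      linarith [hdy n]
  -- weights
  set c : ℕ → ℝ := fun k => (1/2 : ℝ)^k / (α * ‖g k‖ + ‖g k‖ + 1) with hcdef
  have hden : ∀ k, (0:ℝ) < α * ‖g k‖ + ‖g k‖ + 1 := by
    intro k
    nlinarith [norm_nonneg (g k), mul_nonneg hα (norm_nonneg (g k))]
  have hcpos : ∀ k, 0 < c k := fun k => div_pos (by positivity) (hden k)
  have hcb : ∀ k, c k * (α * ‖g k‖) ≤ (1/2 : ℝ)^k := by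
    intro k
    rw [hcdef]
    rw [div_mul_eq_mul_div, div_le_iff₀ (hden k)]
    have h1 : (0:ℝ) ≤ (1/2:ℝ)^k := by positivity
    nlinarith [norm_nonneg (g k), mul_nonneg hα (norm_nonneg (g k))]
  have hcg : ∀ k, c k * ‖g k‖ ≤ (1/2 : ℝ)^k := by
    intro k
    rw [hcdef, div_mul_eq_mul_div, div_le_iff₀ (hden k)]
    have h1 : (0:ℝ) ≤ (1/2:ℝ)^k := by positivity
    nlinarith [norm_nonneg (g k), mul_nonneg hα (norm_nonneg (g k))]
  have hcfb : ∀ k (x : X), c k * |f (g k) x| ≤ (1/2 : ℝ)^k := by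
    intro k x
    refine le_trans ?_ (hcb k)
    exact mul_le_mul_of_nonneg_left (hbound (g k) x) (hcpos k).le
  have hgeo : Summable (fun k : ℕ => ((1/2 : ℝ)^k) * ((1/2 : ℝ)^k)) := by
    have : Summable (fun k : ℕ => ((1/4 : ℝ))^k) :=
      summable_geometric_of_lt_one (by norm_num) (by norm_num)
    refine this.congr fun k => ?_
    rw [← mul_pow]; norm_num
  -- summability in Φ
  have hsummΦ : ∀ x : X, Summable (fun k => ((c k)^2 * f (g k) x) • g k) := by
    intro x
    apply Summable.of_norm
    refine Summable.of_nonneg_of_le (fun k => norm_nonneg _) (fun k => ?_) hgeo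
    rw [norm_smul, Real.norm_eq_abs, abs_mul, abs_of_pos (pow_pos (hcpos k) 2), sq]
    calc c k * c k * |f (g k) x| * ‖g k‖
        = (c k * |f (g k) x|) * (c k * ‖g k‖) := by ring
      _ ≤ (1/2:ℝ)^k * ((1/2:ℝ)^k) := by
          apply mul_le_mul (hcfb k x) (hcg k) (by positivity)
          positivity
  -- summability of kernel terms
  have hsummq : ∀ x y : X, Summable (fun k => (c k)^2 * f (g k) x * f (g k) y) := by
    intro x y
    apply Summable.of_norm
    refine Summable.of_nonneg_of_le (fun k => norm_nonneg _) (fun k => ?_) hgeo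
    rw [Real.norm_eq_abs, abs_mul, abs_mul, abs_of_pos (pow_pos (hcpos k) 2), sq]
    calc c k * c k * |f (g k) x| * |f (g k) y|
        = (c k * |f (g k) x|) * (c k * |f (g k) y|) := by ring
      _ ≤ (1/2:ℝ)^k * ((1/2:ℝ)^k) := by
          apply mul_le_mul (hcfb k x) (hcfb k y) (by positivity)
          positivity
  set χ : X → Φ := fun x => ∑' k, ((c k)^2 * f (g k) x) • g k with hχdef
  set q : X → X → ℝ := fun x y => ∑' k, (c k)^2 * f (g k) x * f (g k) y with hqdef
  -- evaluation functional
  have hEbound : ∀ (y : X) (φ : Φ), ‖(LinearMap.proj y ∘ₗ f : Φ →ₗ[ℝ] ℝ) φ‖ ≤ α * ‖φ‖ := by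
    intro y φ
    simpa [Real.norm_eq_abs] using hbound φ y
  have hχq : ∀ x y : X, f (χ x) y = q x y := by
    intro x y
    set E : Φ →L[ℝ] ℝ := LinearMap.mkContinuous (LinearMap.proj y ∘ₗ f) α (hEbound y) with hEdef
    have hmap : E (χ x) = ∑' k, E (((c k)^2 * f (g k) x) • g k) :=
      E.map_tsum (hsummΦ x)
    have hEapp : ∀ φ : Φ, E φ = f φ y := fun φ => rfl
    rw [hEapp] at hmap
    rw [hχdef, hqdef]
    simp only [hmap, hEapp, map_smul, smul_eq_mul]
    have h2 : ∀ k, E (((c k)^2 * f (g k) x) • g k) = (c k)^2 * f (g k) x * f (g k) y := fun k => by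
      rw [hEapp, map_smul, Pi.smul_apply, smul_eq_mul]
    exact hmap.trans (tsum_congr h2)
  -- difference identity
  have hsumdiff : ∀ x y : X, Summable (fun k => (c k)^2 * (f (g k) x - f (g k) y)^2) := by
    intro x y
    refine (((hsummq x x).sub ((hsummq x y).mul_left 2)).add (hsummq y y)).congr fun k => ?_
    ring
  have hqdiff : ∀ x y : X, q x x - 2 * q x y + q y y
      = ∑' k, (c k)^2 * (f (g k) x - f (g k) y)^2 := by
    intro x y
    rw [hqdef]
    rw [← tsum_mul_left (a := (2:ℝ)), ← Summable.tsum_sub (hsummq x x) ((hsummq x y).mul_left 2),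
      ← Summable.tsum_add ((hsummq x x).sub ((hsummq x y).mul_left 2)) (hsummq y y)]
    exact tsum_congr fun k => by ring
  have hqeqsep : ∀ x y : X, q x x - 2 * q x y + q y y = 0 → x = y := by
    intro x y h
    rw [hqdiff x y] at h
    by_contra hxy
    obtain ⟨k, hk⟩ := hg x y hxy
    have hterm : (c k)^2 * (f (g k) x - f (g k) y)^2 ≤ 0 :=
      h ▸ Summable.le_tsum (hsumdiff x y) k (fun j _ => by positivity)
    have hne : f (g k) x - f (g k) y ≠ 0 := sub_ne_zero.mpr hk
    nlinarith [pow_pos (hcpos k) 2, (sq_pos_of_ne_zero hne : 0 < (f (g k) x - f (g k) y)^2)]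
  have hqdiffnn : ∀ x y : X, 0 ≤ q x x - 2 * q x y + q y y := by
    intro x y
    rw [hqdiff x y]
    exact tsum_nonneg fun k => by positivity
  -- claim A
  have claimA : ∀ m x : X, q x x ≤ q m m → q m m ≤ q m x → x = m := by
    intro m x hxx hmx
    have h1 := hqdiffnn m x
    have h2 : q m m - 2 * q m x + q x x = 0 := by linarith
    exact (hqeqsep m x h2).symm
  -- continuity of diagonal
  have hq_cont : Continuous (fun x : X => q x x) := by
    rw [hqdef]
    apply continuous_tsum
      (fun k => (continuous_const.mul (hcont (g k))).mul (hcont (g k))) hgeo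
    intro k x
    simp only [Real.norm_eq_abs, Pi.mul_apply]
    rw [abs_mul, abs_mul, abs_of_pos (pow_pos (hcpos k) 2), sq]
    calc c k * c k * |f (g k) x| * |f (g k) x|
        = (c k * |f (g k) x|) * (c k * |f (g k) x|) := by ring
      _ ≤ (1/2:ℝ)^k * ((1/2:ℝ)^k) := by
          apply mul_le_mul (hcfb k x) (hcfb k x) (by positivity)
          positivity
  -- density of U ε
  have hUdense : ∀ ε : ℝ, 0 < ε → Dense (U ε) := by
    intro ε hε
    rw [Metric.dense_iff]
    intro φ0 r hr
    set M0 : Set X := {x | Mx φ0 ≤ f φ0 x} with hM0def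
    have hM0c : IsClosed M0 := isClosed_le continuous_const (hcont φ0)
    have hM0ne : M0.Nonempty := ⟨xm φ0, by simp only [hM0def, Set.mem_setOf_eq, hMxdef]; exact le_refl _⟩
    obtain ⟨m, hmM0, hm⟩ :=
      hM0c.isCompact.exists_isMaxOn hM0ne (hq_cont.continuousOn)
    set θ : Φ := χ m with hθdef
    set B : ℝ := α * ‖θ‖ with hBdef
    have hBnn : 0 ≤ B := mul_nonneg hα (norm_nonneg θ)
    set W : ℝ → Set X := fun t =>
      {x | Mx φ0 - t ≤ f φ0 x} ∩ {x | q m m - t ≤ f θ x} with hWdef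
    have hWclosed : ∀ t, IsClosed (W t) :=
      fun t => (isClosed_le continuous_const (hcont φ0)).inter
        (isClosed_le continuous_const (hcont θ))
    have hWmono : ∀ t t' : ℝ, t ≤ t' → W t ⊆ W t' := by
      rintro t t' h x ⟨h1, h2⟩
      exact ⟨by simp only [Set.mem_setOf_eq] at h1 ⊢; linarith,
        by simp only [Set.mem_setOf_eq] at h2 ⊢; linarith⟩
    -- find t0
    obtain ⟨t0, ht0, hWsub⟩ : ∃ t0 > 0, W t0 ⊆ Metric.ball m (ε/3) := by
      by_contra hcon
      push_neg at hcon
      set C : ℕ → Set X := fun n => W (1/(n+1)) ∩ (Metric.ball m (ε/3))ᶜ with hCdef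
      have hCne : ∀ n : ℕ, (C n).Nonempty := by
        intro n
        obtain ⟨x, hxW, hxB⟩ := Set.not_subset.mp (hcon (1/(n+1)) (by positivity))
        exact ⟨x, hxW, hxB⟩
      have hCcl : ∀ n, IsClosed (C n) :=
        fun n => (hWclosed _).inter (isClosed_compl_iff.mpr Metric.isOpen_ball)
      have hCdec : ∀ n, C (n+1) ⊆ C n := by
        intro n
        apply Set.inter_subset_inter_left
        apply hWmono
        rw [div_le_div_iff₀ (by positivity) (by positivity)]
        push_cast; linarith
      obtain ⟨x, hx⟩ := IsCompact.nonempty_iInter_of_sequence_nonempty_isCompact_isClosed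
        C hCdec hCne ((hCcl 0).isCompact) hCcl
      simp only [Set.mem_iInter] at hx
      have h1 : Mx φ0 ≤ f φ0 x := by
        by_contra h
        push_neg at h
        obtain ⟨n, hn⟩ := exists_nat_one_div_lt (sub_pos.mpr h)
        have := ((hx n).1).1
        simp only [Set.mem_setOf_eq] at this
        linarith
      have h2 : q m m ≤ f θ x := by
        by_contra h
        push_neg at h
        obtain ⟨n, hn⟩ := exists_nat_one_div_lt (sub_pos.mpr h)
        have := ((hx n).1).2
        simp only [Set.mem_setOf_eq] at this
        linarith
      have hxm' : x = m := by
        apply claimA m x (hm h1)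
        rw [← hχq m x]
        exact h2
      have := (hx 0).2
      rw [hxm'] at this
      exact this (Metric.mem_ball_self (by positivity))
    -- the perturbation
    set t : ℝ := min (t0 / (t0 + 2*B + 1)) (r / (‖θ‖ + 1)) with htdef
    have htpos : 0 < t := lt_min (by positivity) (by positivity)
    set δ : ℝ := t * t0 / 2 with hδdef
    have hδpos : 0 < δ := by positivity
    set ψ : Φ := φ0 + t • θ with hψdef
    have hfψ : ∀ x : X, f ψ x = f φ0 x + t * f θ x := by
      intro x
      rw [hψdef, map_add, map_smul]
      simp [Pi.add_apply, Pi.smul_apply, smul_eq_mul]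
    refine ⟨ψ, ?_, δ, hδpos, ?_⟩
    · rw [Metric.mem_ball, dist_eq_norm, hψdef, add_sub_cancel_left, norm_smul,
        Real.norm_eq_abs, abs_of_pos htpos]
      have h1 : t ≤ r/(‖θ‖+1) := min_le_right _ _
      have h2 : t * (‖θ‖ + 1) ≤ r := by
        rw [← le_div_iff₀ (by positivity)]
        exact h1
      nlinarith [norm_nonneg θ]
    · -- ψ ∈ U ε
      have hsub : near ψ δ ⊆ Metric.ball m (ε/3) := by
        intro x hx
        apply hWsub
        have hx' : Mx ψ - δ ≤ f ψ x := hx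
        have hψx := hfψ x
        have hψm := hfψ m
        have hMψ : f ψ m ≤ Mx ψ := hMx ψ m
        have hfθm : f θ m = q m m := hχq m m
        have hfφ0m : Mx φ0 ≤ f φ0 m := hmM0
        have hfφ0x : f φ0 x ≤ Mx φ0 := hMx φ0 x
        have hBx := abs_le.mp (hbound θ x)
        have hBm := abs_le.mp (hbound θ m)
        rw [← hBdef] at hBx hBm
        have ht1 : t ≤ t0 / (t0 + 2*B + 1) := min_le_left _ _
        have ht2 : t * (t0 + 2*B + 1) ≤ t0 := by
          rw [← le_div_iff₀ (by positivity)]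
          exact ht1
        have hfθm' : t * f θ m = t * (q m m) := by rw [hfθm]
        constructor
        · show Mx φ0 - t0 ≤ f φ0 x
          have hmul1 : t * (f θ x - f θ m) ≤ t * (2*B) :=
            mul_le_mul_of_nonneg_left (by linarith [hBx.1, hBx.2, hBm.1, hBm.2]) htpos.le
          have hmul2 : t * (t0/2 + 2*B) ≤ t * (t0 + 2*B + 1) :=
            mul_le_mul_of_nonneg_left (by linarith) htpos.le
          linarith [hmul1, hmul2, ht2, hx', hMψ, hψx, hψm, hfφ0m, hδdef]
        · show q m m - t0 ≤ f θ x
          have key : t * (q m m - t0/2) ≤ t * f θ x := by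
            linarith [hx', hMψ, hψx, hψm, hfφ0m, hfφ0x, hfθm', hδdef]
          have := (mul_le_mul_iff_right₀ htpos).mp key
          linarith
      calc Metric.diam (near ψ δ) ≤ Metric.diam (Metric.ball m (ε/3)) :=
            Metric.diam_mono hsub Metric.isBounded_ball
        _ ≤ 2 * (ε/3) := Metric.diam_ball (by positivity)
        _ < ε := by linarith
  -- assemble
  refine ⟨⋂ n : ℕ, U (1/(n+1)), ?_, ?_, ?_⟩
  · exact dense_iInter_of_isOpen (fun n => hUopen _)
      (fun n => hUdense _ (by positivity))
  · exact IsGδ.iInter fun n => (hUopen _).isGδ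
  · intro φ hφ
    exact hUmem φ (fun n => Set.mem_iInter.mp hφ n)

end Aux

/-- **Krein–Milman theorem with `Φ`-exposed points (metrizable case).** Let `S` be a Hausdorff
space, `Φ` a Banach space of real-valued functions on `S`, and `K` a nonempty compact
metrizable `Φ`-convex subset of `S` such that every `φ ∈ Φ` is continuous on `K` and bounded
on `K` by `α_K ‖φ‖`, and `Φ` separates the points of `K`. Then (i) the set of `φ ∈ Φ` that
attain a strict maximum on `K` contains a dense `Gδ` subset of `Φ` (in particular `K` has a
`Φ`-exposed point), and (ii) `K` is the `Φ`-convex hull of its `Φ`-exposed points. -/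
theorem stmt_8 {S : Type*} [TopologicalSpace S] [T2Space S]
    {Φ : Type*} [NormedAddCommGroup Φ] [NormedSpace ℝ Φ] [CompleteSpace Φ]
    (ι : Φ →ₗ[ℝ] (S → ℝ)) (hinj : Function.Injective ι)
    (K : Set S) (hne : K.Nonempty) (hcomp : IsCompact K)
    (hmetr : TopologicalSpace.MetrizableSpace K)
    (hKconv : IsPhiConvex (fun φ => ι φ) K)
    (hcont : ∀ φ : Φ, ContinuousOn (ι φ) K)
    (αK : ℝ) (hαK : 0 ≤ αK) (hbound : ∀ φ : Φ, ∀ x ∈ K, |ι φ x| ≤ αK * ‖φ‖)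
    (hsep : ∀ x ∈ K, ∀ y ∈ K, x ≠ y → ∃ φ : Φ, ι φ x ≠ ι φ y) :
    (∃ G : Set Φ, Dense G ∧ IsGδ G ∧
        G ⊆ {φ : Φ | ∃ x ∈ K, ∀ y ∈ K, y ≠ x → ι φ y < ι φ x}) ∧
      (phiExposedPoints (fun φ => ι φ) K).Nonempty ∧
      K = phiConvexHull (fun φ => ι φ) (phiExposedPoints (fun φ => ι φ) K) := by
  letI : MetricSpace ↥K := TopologicalSpace.metrizableSpaceMetric ↥K
  haveI : CompactSpace ↥K := isCompact_iff_compactSpace.mp hcomp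
  haveI : Nonempty ↥K := hne.to_subtype
  haveI : Nonempty Φ := ⟨0⟩
  set f : Φ →ₗ[ℝ] (↥K → ℝ) := (LinearMap.funLeft ℝ ℝ (Subtype.val : ↥K → S)).comp ι
    with hfdef
  have hfapp : ∀ (φ : Φ) (x : ↥K), f φ x = ι φ x.val := fun _ _ => rfl
  have hfcont : ∀ φ, Continuous (f φ) := fun φ => (hcont φ).restrict
  have hfbound : ∀ (φ : Φ) (x : ↥K), |f φ x| ≤ αK * ‖φ‖ := fun φ x => hbound φ x.val x.2
  have hfsepseq : ∃ g : ℕ → Φ, ∀ x y : ↥K, x ≠ y → ∃ k, f (g k) x ≠ f (g k) y :=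
    exists_separating_seq (fun φ => f φ) hfcont
      (fun x y hxy => hsep x.val x.2 y.val y.2 (Subtype.val_injective.ne hxy))
  obtain ⟨G, hGd, hGδ, hGmem⟩ := aux_dense_gdelta f hfcont αK hαK hfbound hfsepseq
  have hGsub : G ⊆ {φ : Φ | ∃ x ∈ K, ∀ y ∈ K, y ≠ x → ι φ y < ι φ x} := by
    intro φ hφ
    obtain ⟨x, hx⟩ := hGmem φ hφ
    exact ⟨x.val, x.2, fun y hy hyx =>
      hx ⟨y, hy⟩ (fun h => hyx (congrArg Subtype.val h))⟩
  have hlipS : ∀ (φ ψ : Φ), ∀ x ∈ K, |ι φ x - ι ψ x| ≤ αK * ‖φ - ψ‖ := by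
    intro φ ψ x hx
    have h := hbound (φ - ψ) x hx
    rwa [map_sub, Pi.sub_apply] at h
  refine ⟨⟨G, hGd, hGδ, hGsub⟩, ?_, ?_⟩
  · obtain ⟨φ, hφG⟩ := hGd.nonempty
    obtain ⟨x, hxK, hx⟩ := hGsub hφG
    exact ⟨x, hxK, φ, hx⟩
  · apply Set.Subset.antisymm
    · intro z hz
      refine Set.mem_sInter.mpr fun Xc hXc => ?_
      obtain ⟨hconv, hsub⟩ := hXc
      rcases hconv with huniv | ⟨T, hTne, hTeq⟩
      · rw [huniv]; trivial
      · rw [hTeq]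
        refine Set.mem_iInter₂.mpr fun p hp => ?_
        by_contra hzn
        simp only [Set.mem_setOf_eq, not_le] at hzn
        set φ := p.1 with hφdef
        set lam := p.2 with hlamdef
        set d := ι φ z - lam with hddef
        have hd : 0 < d := by rw [hddef]; linarith
        have hr : 0 < d / (2*αK + 2) := by positivity
        obtain ⟨ψ, hψball, hψG⟩ := Metric.dense_iff.mp hGd φ _ hr
        obtain ⟨x', hx'K, hx'max⟩ := hGsub hψG
        have hx'exp : x' ∈ phiExposedPoints (fun φ => ι φ) K := ⟨hx'K, ψ, hx'max⟩
        have hx'Xc : x' ∈ Xc := hsub hx'exp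
        have hx'half : ι φ x' ≤ lam := by
          rw [hTeq] at hx'Xc
          exact Set.mem_iInter₂.mp hx'Xc p hp
        have hdist : ‖ψ - φ‖ < d / (2*αK + 2) := by
          rw [Metric.mem_ball, dist_eq_norm] at hψball
          exact hψball
        have hψz_le : ι ψ z ≤ ι ψ x' := by
          by_cases hzx : z = x'
          · rw [hzx]
          · exact (hx'max z hz hzx).le
        have lip1 := abs_le.mp (hlipS φ ψ x' hx'K)
        have lip2 := abs_le.mp (hlipS ψ φ z hz)
        have hnrev : ‖φ - ψ‖ = ‖ψ - φ‖ := norm_sub_rev _ _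
        rw [hnrev] at lip1
        have hαr : αK * ‖ψ - φ‖ ≤ αK * (d / (2*αK + 2)) :=
          mul_le_mul_of_nonneg_left hdist.le hαK
        have hfrac : 2 * (αK * (d / (2*αK + 2))) < d := by
          have heq : 2 * (αK * (d / (2*αK + 2))) = (2*αK) * d / (2*αK + 2) := by ring
          rw [heq, div_lt_iff₀ (by linarith)]
          nlinarith [hd]
        linarith [lip1.1, lip1.2, lip2.1, lip2.2]
    · exact Set.sInter_subset_of_mem ⟨hKconv, fun x hx => hx.1⟩
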